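/- arXiv:2109.14307 — 2 statements merged into one kernel-verified Lean document; each statement's English description precedes it below -/
import Mathlib

section
/- Let F(x) ∈ ℂ[x][[t]] and ρ ∈ ℂ. Then the non-negative part in x of F(1/x)/(1-ρx)^2 equals F(ρ)/(1-ρx)^2 + ρF'(ρ)/(1-ρx), where F' denotes the derivative of F with respect to x (applied coefficientwise in t). -/
lemma stmt_1_aux (f : Polynomial ℂ) (ρ : ℂ) (k : ℕ) :
    (f.sum fun j a => a * ((k : ℂ) + (j : ℂ) + 1) * ρ ^ (k + j))
      = f.eval ρ * ((k : ℂ) + 1) * ρ ^ k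
        + ρ * (Polynomial.derivative f).eval ρ * ρ ^ k := by
  induction f using Polynomial.induction_on' with
  | add p q hp hq =>
    rw [Polynomial.sum_add_index p q _ (fun i => by simp) (fun a b c => by ring), hp, hq]
    simp only [Polynomial.eval_add, map_add]
    ring
  | monomial j c =>
    rw [Polynomial.sum_monomial_index]
    · simp only [Polynomial.derivative_monomial, Polynomial.eval_monomial]
      cases j with
      | zero => simp
      | succ m =>
        push_cast
        rw [pow_add, pow_succ]
        ring
    · simp

/-- Pole extraction lemma, double pole: for `F ∈ ℂ[x][[t]]` and `ρ ∈ ℂ`,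
`[x^{≥0}] (F(1/x)/(1-ρx)^2) = F(ρ)/(1-ρx)^2 + ρ F'(ρ)/(1-ρx)`, stated
coefficientwise: for each `t`-coefficient `f = coeff n F` and each
`x`-exponent `k ≥ 0`, the coefficient of `x^k` in
`f(1/x)·∑_m (m+1) ρ^m x^m`, namely `∑_j f_j (k+j+1) ρ^{k+j}`, equals
`f(ρ)(k+1)ρ^k + ρ f'(ρ) ρ^k`. -/
theorem stmt_1 (F : PowerSeries (Polynomial ℂ)) (ρ : ℂ) (n : ℕ) (k : ℕ) :
    ((PowerSeries.coeff (R := Polynomial ℂ) n F).sum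
        fun j a => a * ((k : ℂ) + (j : ℂ) + 1) * ρ ^ (k + j))
      = (PowerSeries.coeff (R := Polynomial ℂ) n F).eval ρ * ((k : ℂ) + 1) * ρ ^ k
        + ρ * (Polynomial.derivative (PowerSeries.coeff (R := Polynomial ℂ) n F)).eval ρ * ρ ^ k :=
  stmt_1_aux _ ρ k
end

section
/- Let u ∈ ℚ[[t]] be the unique power series with u(0)=0 satisfying (1-3u)^3(1+u)t^2 + (1+18u^2-27u^4)t - u = 0. Then there exists a unique power series v ∈ ℚ[[t]] with v(0)=0 satisfying (1 + 3v - v^3)u - v(v^2+v+1) = 0, and v = t + 3t^2 + O(t^3). -/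
open PowerSeries

private noncomputable def Gv (u a : PowerSeries ℚ) : PowerSeries ℚ :=
  u + 3*u*a - a^2 - a^3 - u*a^3

private lemma cm1 (p q : PowerSeries ℚ) :
    coeff (R := ℚ) 1 (p*q) = constantCoeff (R := ℚ) p * coeff (R := ℚ) 1 q + coeff (R := ℚ) 1 p * constantCoeff (R := ℚ) q := by
  have h1 : (Finset.HasAntidiagonal.antidiagonal 1 : Finset (ℕ×ℕ)) = {(0,1),(1,0)} := by decide
  rw [coeff_mul, h1, Finset.sum_insert (by decide), Finset.sum_singleton]
  simp [coeff_zero_eq_constantCoeff]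

private lemma cm2 (p q : PowerSeries ℚ) :
    coeff (R := ℚ) 2 (p*q) = constantCoeff (R := ℚ) p * coeff (R := ℚ) 2 q + coeff (R := ℚ) 1 p * coeff (R := ℚ) 1 q
      + coeff (R := ℚ) 2 p * constantCoeff (R := ℚ) q := by
  have h2 : (Finset.HasAntidiagonal.antidiagonal 2 : Finset (ℕ×ℕ)) = {(0,2),(1,1),(2,0)} := by decide
  rw [coeff_mul, h2, Finset.sum_insert (by decide), Finset.sum_insert (by decide),
    Finset.sum_singleton]
  simp [coeff_zero_eq_constantCoeff]
  ring

private lemma cn1 (n : ℕ) [n.AtLeastTwo] : coeff (R := ℚ) 1 (OfNat.ofNat n : PowerSeries ℚ) = 0 := by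
  rw [← map_ofNat (C (R := ℚ)) n, coeff_C]; norm_num

private lemma cn2 (n : ℕ) [n.AtLeastTwo] : coeff (R := ℚ) 2 (OfNat.ofNat n : PowerSeries ℚ) = 0 := by
  rw [← map_ofNat (C (R := ℚ)) n, coeff_C]; norm_num

private lemma cn0 (n : ℕ) [n.AtLeastTwo] :
    constantCoeff (R := ℚ) (OfNat.ofNat n : PowerSeries ℚ) = OfNat.ofNat n := by
  rw [← map_ofNat (C (R := ℚ)) n, constantCoeff_C]

private lemma cX2 : coeff (R := ℚ) 2 (X : PowerSeries ℚ) = 0 := by rw [coeff_X]; norm_num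

private lemma mul_small (p q : PowerSeries ℚ) (n : ℕ)
    (hp : ∀ j ≤ n, coeff (R := ℚ) j p = 0) (hq : constantCoeff (R := ℚ) q = 0) :
    ∀ j ≤ n+1, coeff (R := ℚ) j (p*q) = 0 := by
  intro j hj
  rw [coeff_mul]
  apply Finset.sum_eq_zero
  intro x hx
  rw [Finset.HasAntidiagonal.mem_antidiagonal] at hx
  by_cases h : x.1 ≤ n
  · rw [hp x.1 h, zero_mul]
  · have h2 : x.2 = 0 := by omega
    rw [h2, coeff_zero_eq_constantCoeff, hq, mul_zero]

private lemma G0 (u a : PowerSeries ℚ) (hu0 : constantCoeff (R := ℚ) u = 0)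
    (ha0 : constantCoeff (R := ℚ) a = 0) : constantCoeff (R := ℚ) (Gv u a) = 0 := by
  simp [Gv, hu0, ha0]

private lemma step (u a b : PowerSeries ℚ) (hu0 : constantCoeff (R := ℚ) u = 0)
    (ha0 : constantCoeff (R := ℚ) a = 0) (hb0 : constantCoeff (R := ℚ) b = 0) (n : ℕ)
    (h : ∀ j ≤ n, coeff (R := ℚ) j a = coeff (R := ℚ) j b) :
    ∀ j ≤ n+1, coeff (R := ℚ) j (Gv u a) = coeff (R := ℚ) j (Gv u b) := by
  intro j hj
  have hd : Gv u a - Gv u b = (a - b) * (3*u - (a+b) - (1+u)*(a^2+a*b+b^2)) := by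
    unfold Gv; ring
  have h1 : ∀ j ≤ n, coeff (R := ℚ) j (a-b) = 0 := by
    intro j hj; rw [map_sub, h j hj, sub_self]
  have h2 : constantCoeff (R := ℚ) (3*u - (a+b) - (1+u)*(a^2+a*b+b^2)) = 0 := by
    simp [hu0, ha0, hb0]
  have h3 : coeff (R := ℚ) j (Gv u a - Gv u b) = 0 := by
    rw [hd]; exact mul_small _ _ n h1 h2 j hj
  rw [map_sub, sub_eq_zero] at h3
  exact h3

private lemma uniq (u a b : PowerSeries ℚ) (hu0 : constantCoeff (R := ℚ) u = 0)
    (ha0 : constantCoeff (R := ℚ) a = 0) (hb0 : constantCoeff (R := ℚ) b = 0)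
    (ha : a = Gv u a) (hb : b = Gv u b) : a = b := by
  ext n
  induction n using Nat.strong_induction_on with
  | _ n ih =>
    match n with
    | 0 => rw [coeff_zero_eq_constantCoeff, ha0, hb0]
    | Nat.succ m =>
      have h : ∀ j ≤ m, coeff (R := ℚ) j a = coeff (R := ℚ) j b := fun j hj => ih j (by omega)
      calc coeff (R := ℚ) (m+1) a = coeff (R := ℚ) (m+1) (Gv u a) := by rw [← ha]
        _ = coeff (R := ℚ) (m+1) (Gv u b) := step u a b hu0 ha0 hb0 m h (m+1) le_rfl
        _ = coeff (R := ℚ) (m+1) b := by rw [← hb]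

private lemma exists_fix (u : PowerSeries ℚ) (hu0 : constantCoeff (R := ℚ) u = 0) :
    ∃ v : PowerSeries ℚ, constantCoeff (R := ℚ) v = 0 ∧ v = Gv u v := by
  set s : ℕ → PowerSeries ℚ := fun k => (Gv u)^[k] 0 with hs
  have hsucc : ∀ k, s (k+1) = Gv u (s k) := by
    intro k; simp [hs, Function.iterate_succ_apply']
  have hs0 : ∀ k, constantCoeff (R := ℚ) (s k) = 0 := by
    intro k
    induction k with
    | zero => simp [hs]
    | succ m ih => rw [hsucc]; exact G0 u _ hu0 ih
  have agr : ∀ k, ∀ j ≤ k, coeff (R := ℚ) j (s k) = coeff (R := ℚ) j (s (k+1)) := by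
    intro k
    induction k with
    | zero =>
      intro j hj
      interval_cases j
      rw [coeff_zero_eq_constantCoeff, hs0, hs0]
    | succ m ih =>
      rw [hsucc, hsucc]
      exact step u (s m) (s (m+1)) hu0 (hs0 m) (hs0 (m+1)) m ih
  have mono : ∀ k m, k ≤ m → ∀ j ≤ k, coeff (R := ℚ) j (s k) = coeff (R := ℚ) j (s m) := by
    intro k m hkm
    induction m, hkm using Nat.le_induction with
    | base => intro j _; rfl
    | succ m hm ih =>
      intro j hj
      rw [ih j hj]
      exact agr m j (le_trans hj hm)
  refine ⟨PowerSeries.mk (fun n => coeff (R := ℚ) n (s n)), ?_, ?_⟩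
  · rw [coeff_zero_eq_constantCoeff.symm, coeff_mk, coeff_zero_eq_constantCoeff, hs0]
  · set v := PowerSeries.mk (fun n => coeff (R := ℚ) n (s n)) with hv
    have hv0 : constantCoeff (R := ℚ) v = 0 := by
      rw [coeff_zero_eq_constantCoeff.symm, coeff_mk, coeff_zero_eq_constantCoeff, hs0]
    have hvagr : ∀ m, ∀ j ≤ m, coeff (R := ℚ) j v = coeff (R := ℚ) j (s m) := by
      intro m j hj
      rw [hv, coeff_mk]
      exact mono j m hj j le_rfl
    ext n
    calc coeff (R := ℚ) n v = coeff (R := ℚ) n (s n) := by rw [hv, coeff_mk]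
      _ = coeff (R := ℚ) n (s (n+1)) := agr n n le_rfl
      _ = coeff (R := ℚ) n (Gv u (s n)) := by rw [hsucc]
      _ = coeff (R := ℚ) n (Gv u v) := by
        exact step u (s n) v hu0 (hs0 n) hv0 n (fun j hj => (hvagr n j hj).symm) n (by omega)

/-- Let `u ∈ ℚ[[t]]` be the unique power series with `u(0)=0` satisfying
`(1-3u)³(1+u)t² + (1+18u²-27u⁴)t - u = 0`.  Then there is a unique power
series `v ∈ ℚ[[t]]` with `v(0)=0` satisfying `(1+3v-v³)u - v(v²+v+1) = 0`,
and `v = t + 3t² + ⋯`. -/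
theorem stmt_7 (u : PowerSeries ℚ)
    (hu0 : constantCoeff (R := ℚ) u = 0)
    (hu : (1 - 3 * u) ^ 3 * (1 + u) * X ^ 2 + (1 + 18 * u ^ 2 - 27 * u ^ 4) * X - u = 0) :
    (∃! v : PowerSeries ℚ, constantCoeff (R := ℚ) v = 0 ∧
      (1 + 3 * v - v ^ 3) * u - v * (v ^ 2 + v + 1) = 0) ∧
    (∀ v : PowerSeries ℚ, constantCoeff (R := ℚ) v = 0 →
      (1 + 3 * v - v ^ 3) * u - v * (v ^ 2 + v + 1) = 0 →
      coeff (R := ℚ) 1 v = 1 ∧ coeff (R := ℚ) 2 v = 3) := by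
  have hiff : ∀ v : PowerSeries ℚ,
      ((1 + 3 * v - v ^ 3) * u - v * (v ^ 2 + v + 1) = 0) ↔ v = Gv u v := by
    intro v
    constructor
    · intro h
      have h2 : Gv u v - v = 0 := by rw [← h]; unfold Gv; ring
      exact (sub_eq_zero.mp h2).symm
    · intro h
      have h2 : (1 + 3 * v - v ^ 3) * u - v * (v ^ 2 + v + 1) = Gv u v - v := by
        unfold Gv; ring
      rw [h2, ← h, sub_self]
  obtain ⟨v, hv0, hvfix⟩ := exists_fix u hu0
  have hu' : u = (1 - 3 * u) ^ 3 * (1 + u) * X ^ 2 + (1 + 18 * u ^ 2 - 27 * u ^ 4) * X := by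
    linear_combination -hu
  have u1 : coeff (R := ℚ) 1 u = 1 := by
    conv_lhs => rw [hu']
    simp [cm1, cn1, cn0, cX2, pow_succ, hu0, coeff_one]
  have u2 : coeff (R := ℚ) 2 u = 1 := by
    conv_lhs => rw [hu']
    simp [cm1, cm2, cn1, cn2, cn0, cX2, pow_succ, hu0, coeff_one]
  constructor
  · exact ⟨v, ⟨hv0, (hiff v).mpr hvfix⟩,
      fun w hw => uniq u w v hu0 hw.1 hv0 ((hiff w).mp hw.2) hvfix⟩
  · intro w hw0 hweq
    have hw : w = Gv u w := (hiff w).mp hweq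
    have w1 : coeff (R := ℚ) 1 w = 1 := by
      conv_lhs => rw [hw]
      simp [Gv, cm1, cn1, cn0, pow_succ, hu0, hw0, u1]
    refine ⟨w1, ?_⟩
    conv_lhs => rw [hw]
    have h3 : constantCoeff (R := ℚ) (3 : PowerSeries ℚ) = 3 := cn0 3
    simp [Gv, cm1, cm2, cn1, cn2, cn0, h3, pow_succ, hu0, hw0, u1, u2, w1]
end
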